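/- arXiv:2307.14315 — 5 statements merged into one kernel-verified Lean document; each statement's English description precedes it below -/
import Mathlib

section
/- Let f : (Z/2)^n → B be a function to an arbitrary type, and suppose there is a subgroup S ≤ (Z/2)^n such that for all x,y: f(x) = f(y) if and only if x ⊕ y ∈ S. Decompose (Z/2)^n as (Z/2)^{n-t} × (Z/2)^t and define S_l = {s_l ∈ (Z/2)^{n-t} | ∃ s_r ∈ (Z/2)^t, (s_l, s_r) ∈ S} (the image of S under the projection to the first n−t coordinates). Then for all u, v ∈ (Z/2)^{n-t}: the multisets G(u) = {f(u,w) | w ∈ (Z/2)^t} and G(v) = {f(v,w) | w ∈ (Z/2)^t} are equal if and only if u ⊕ v ∈ S_l. -/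
/-- Theorem 1 of the paper: for `f` hidden by a subgroup `S` of
`(ZMod 2)^{n-t} × (ZMod 2)^t`, the multisets `G(u)` and `G(v)` of row
values agree iff `u ⊕ v` lies in the projection `S_l` of `S` onto the
first factor. Multiset equality is expressed by equality of counts of
every value `z`. -/
theorem stmt7 {a t : ℕ} {B : Type*} [DecidableEq B]
    (f : (Fin a → ZMod 2) × (Fin t → ZMod 2) → B)
    (S : AddSubgroup ((Fin a → ZMod 2) × (Fin t → ZMod 2)))
    (hf : ∀ x y, f x = f y ↔ x + y ∈ S) :
    ∀ u v : Fin a → ZMod 2,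
      (∀ z : B,
          (Finset.univ.filter fun w : Fin t → ZMod 2 => f (u, w) = z).card =
          (Finset.univ.filter fun w : Fin t → ZMod 2 => f (v, w) = z).card)
        ↔ ∃ b : Fin t → ZMod 2, (u + v, b) ∈ S := by
  have self0 : ∀ w : Fin t → ZMod 2, w + w = 0 := by
    intro w; funext i; exact CharTwo.add_self_eq_zero _
  intro u v
  constructor
  · intro h
    have h0 := h (f (u, 0))
    have hpos : 0 < (Finset.univ.filter fun w : Fin t → ZMod 2 => f (u, w) = f (u, 0)).card := by
      apply Finset.card_pos.mpr
      exact ⟨0, by simp⟩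
    rw [h0] at hpos
    obtain ⟨w, hw⟩ := Finset.card_pos.mp hpos
    simp only [Finset.mem_filter, Finset.mem_univ, true_and] at hw
    have hS := (hf (v, w) (u, 0)).mp hw
    refine ⟨w, ?_⟩
    have heq : ((v, w) + (u, 0) : _) = (u + v, w) := by
      simp [Prod.ext_iff, add_comm]
    rwa [heq] at hS
  · rintro ⟨b, hb⟩
    intro z
    apply Finset.card_bij' (fun w _ => w + b) (fun w _ => w + b)
    · intro w hw
      simp only [Finset.mem_filter, Finset.mem_univ, true_and] at hw ⊢
      rw [← hw]
      symm
      apply (hf _ _).mpr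
      have : ((u, w) + (v, w + b) : _) = (u + v, b) := by
        simp [Prod.ext_iff]
        rw [← add_assoc, self0, zero_add]
      rwa [this]
    · intro w hw
      simp only [Finset.mem_filter, Finset.mem_univ, true_and] at hw ⊢
      rw [← hw]
      apply (hf _ _).mpr
      have : ((u, w + b) + (v, w) : _) = (u + v, b) := by
        simp [Prod.ext_iff]
        rw [add_comm w b, add_assoc, self0, add_zero]
      rwa [this]
    · intro w _; rw [add_assoc, self0, add_zero]
    · intro w _; rw [add_assoc, self0, add_zero]
end

section
/- Let f : (Z/2)^n → B satisfy f(x) = f(y) ⟺ x ⊕ y ∈ S for a subgroup S ≤ (Z/2)^n. With the decomposition (Z/2)^n = (Z/2)^{n-t} × (Z/2)^t and S_l the projection of S to the first factor, if u ⊕ v ∈ S_l then for every value z, the number of w ∈ (Z/2)^t with f(u,w) = z equals the number of w with f(v,w) = z. -/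
/-- Direction (⟸) of Theorem 1: if `u ⊕ v ∈ S_l` (the projection of the
hiding subgroup `S` onto the first factor), then for every value `z` the
number of `w` with `f(u,w) = z` equals the number of `w` with `f(v,w) = z`. -/
theorem stmt8 {a t : ℕ} {B : Type*} [DecidableEq B]
    (f : (Fin a → ZMod 2) × (Fin t → ZMod 2) → B)
    (S : AddSubgroup ((Fin a → ZMod 2) × (Fin t → ZMod 2)))
    (hf : ∀ x y, f x = f y ↔ x + y ∈ S)
    (u v : Fin a → ZMod 2)
    (huv : ∃ b : Fin t → ZMod 2, (u + v, b) ∈ S) :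
    ∀ z : B,
      (Finset.univ.filter fun w : Fin t → ZMod 2 => f (u, w) = z).card =
      (Finset.univ.filter fun w : Fin t → ZMod 2 => f (v, w) = z).card := by
  obtain ⟨b, hb⟩ := huv
  have self : ∀ w : Fin t → ZMod 2, w + w = 0 := fun w =>
    funext fun i => CharTwo.add_self_eq_zero _
  have key : ∀ w : Fin t → ZMod 2, f (u, w) = f (v, w + b) := by
    intro w
    rw [hf]
    have : (u, w) + (v, w + b) = (u + v, b) := by
      ext i <;> simp [add_comm, add_assoc, add_left_comm, self]
    rw [this]; exact hb
  intro z
  apply Finset.card_bij (fun w _ => w + b)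
  · intro w hw
    simp only [Finset.mem_filter, Finset.mem_univ, true_and] at hw ⊢
    rw [← key, hw]
  · intro x hx y hy h
    have := congrArg (· + b) h
    simpa [add_assoc, self] using this
  · intro w hw
    refine ⟨w + b, ?_, by rw [add_assoc, self, add_zero]⟩
    simp only [Finset.mem_filter, Finset.mem_univ, true_and] at hw ⊢
    rw [key, add_assoc, self, add_zero]
    exact hw
end

section
/- Let f : (Z/2)^n → B satisfy f(x) = f(y) ⟺ x ⊕ y ∈ S for a subgroup S. With (Z/2)^n = (Z/2)^{n-t} × (Z/2)^t and S_l the projection of S, if the multisets {f(u,w) : w ∈ (Z/2)^t} and {f(v,w) : w ∈ (Z/2)^t} coincide, then u ⊕ v ∈ S_l. -/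
/-- Direction (⟹) of Theorem 1: if the multisets of row values
`{f(u,w) : w}` and `{f(v,w) : w}` coincide (equal counts for every value
`z`), then `u ⊕ v` lies in the projection `S_l` of `S`. -/
theorem stmt9 {a t : ℕ} {B : Type*} [DecidableEq B]
    (f : (Fin a → ZMod 2) × (Fin t → ZMod 2) → B)
    (S : AddSubgroup ((Fin a → ZMod 2) × (Fin t → ZMod 2)))
    (hf : ∀ x y, f x = f y ↔ x + y ∈ S)
    (u v : Fin a → ZMod 2)
    (hG : ∀ z : B,
      (Finset.univ.filter fun w : Fin t → ZMod 2 => f (u, w) = z).card =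
      (Finset.univ.filter fun w : Fin t → ZMod 2 => f (v, w) = z).card) :
    ∃ b : Fin t → ZMod 2, (u + v, b) ∈ S := by
  have h := hG (f (u, 0))
  have hpos : 0 < (Finset.univ.filter fun w : Fin t → ZMod 2 => f (u, w) = f (u, 0)).card := by
    apply Finset.card_pos.mpr
    exact ⟨0, by simp⟩
  rw [h] at hpos
  obtain ⟨w, hw⟩ := Finset.card_pos.mp hpos
  simp only [Finset.mem_filter] at hw
  have := (hf (v, w) (u, 0)).mp hw.2
  have heq : (v, w) + (u, 0) = (u + v, w) := by
    ext i <;> simp [add_comm]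
  rw [heq] at this
  exact ⟨w, this⟩
end

section
/- Let f : (Z/2)^n → B satisfy f(x) = f(y) ⟺ x ⊕ y ∈ S for a subgroup S ≤ (Z/2)^n = (Z/2)^{n-t} × (Z/2)^t. Let e_1,…,e_k ∈ (Z/2)^{n-t} be a basis of S_l (the projection of S), and suppose v_1,…,v_k ∈ (Z/2)^t satisfy f(0, v_i) = f(e_i, 0) for each i. For γ ∈ {0,1}^k let V_γ = {v ∈ (Z/2)^t | f(0, Σ_i γ_i v_i) = f(0, v)}. Then S = ⋃_{γ ∈ {0,1}^k} {(Σ_i γ_i e_i, v) | v ∈ V_γ}. -/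
/-- Correctness of the reconstruction step (Algorithm 5): if `f` is hidden
by a subgroup `S`, `e 1, …, e k` is a basis of the projection `S_l`, and
`v i` satisfies `f(0, v i) = f(e i, 0)`, then `S` consists exactly of the
pairs `(Σ γ_i e_i, v)` with `f(0, Σ γ_i v_i) = f(0, v)`. -/
theorem stmt11 {a t k : ℕ} {B : Type*}
    (f : (Fin a → ZMod 2) × (Fin t → ZMod 2) → B)
    (S : AddSubgroup ((Fin a → ZMod 2) × (Fin t → ZMod 2)))
    (hf : ∀ x y, f x = f y ↔ x + y ∈ S)
    (e : Fin k → (Fin a → ZMod 2))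
    (he_indep : LinearIndependent (ZMod 2) e)
    (he_span : ∀ x : Fin a → ZMod 2,
      (∃ b, (x, b) ∈ S) ↔ x ∈ Submodule.span (ZMod 2) (Set.range e))
    (v : Fin k → (Fin t → ZMod 2))
    (hv : ∀ i, f (0, v i) = f (e i, 0)) :
    ∀ p : (Fin a → ZMod 2) × (Fin t → ZMod 2),
      p ∈ S ↔ ∃ γ : Fin k → ZMod 2,
        p.1 = ∑ i, γ i • e i ∧ f (0, ∑ i, γ i • v i) = f (0, p.2) := by
  have hev : ∀ i, (e i, v i) ∈ S := by
    intro i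
    have := (hf (0, v i) (e i, 0)).mp (hv i)
    have h2 : ((0 : Fin a → ZMod 2), v i) + (e i, (0 : Fin t → ZMod 2)) = (e i, v i) := by
      simp [Prod.ext_iff]
    rwa [h2] at this
  have hSum : ∀ γ : Fin k → ZMod 2, ((∑ i, γ i • e i, ∑ i, γ i • v i)) ∈ S := by
    intro γ
    have : (∑ i, γ i • (e i, v i)) ∈ S := by
      apply AddSubgroup.sum_mem
      intro i _
      rcases (by decide : ∀ z : ZMod 2, z = 0 ∨ z = 1) (γ i) with h | h
      · simp [h, S.zero_mem]
      · simpa [h] using hev i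
    have heq : (∑ i, γ i • (e i, v i)) = ((∑ i, γ i • e i, ∑ i, γ i • v i)) := by
      rw [Prod.ext_iff]
      constructor <;> simp [Prod.fst_sum, Prod.snd_sum]
    rwa [heq] at this
  have hw : ∀ {m : ℕ} (w : Fin m → ZMod 2), w + w = 0 := fun w => by
    funext j; exact CharTwo.add_self_eq_zero _
  intro p
  constructor
  · intro hp
    have hx : p.1 ∈ Submodule.span (ZMod 2) (Set.range e) :=
      (he_span p.1).mp ⟨p.2, by simpa using hp⟩
    obtain ⟨γ, hγ⟩ := (Submodule.mem_span_range_iff_exists_fun (ZMod 2)).mp hx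
    refine ⟨γ, hγ.symm, ?_⟩
    rw [hf]
    have := S.add_mem (hSum γ) hp
    have h2 : ((0 : Fin a → ZMod 2), ∑ i, γ i • v i) + (0, p.2)
        = (∑ i, γ i • e i, ∑ i, γ i • v i) + p := by
      apply Prod.ext <;> simp [hγ, two_smul, hw]
    rwa [h2]
  · rintro ⟨γ, h1, h2⟩
    have hm := (hf _ _).mp h2
    have := S.add_mem (hSum γ) hm
    have heq : (∑ i, γ i • e i, ∑ i, γ i • v i)
        + (((0 : Fin a → ZMod 2), ∑ i, γ i • v i) + (0, p.2)) = p := by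
      apply Prod.ext
      · simp [h1]
      · simp [← add_assoc, hw]
    rwa [heq] at this
end

section
/- Under the hypotheses of the reconstruction lemma (f hidden by subgroup S, e_1,…,e_k a basis of S_l, f(0,v_i) = f(e_i,0)), for every γ ∈ {0,1}^k one has f(0, Σ_i γ_i v_i) = f(Σ_i γ_i e_i, 0); consequently (Σ_i γ_i e_i) ⊕ (Σ_i γ_i v_i) viewed as an element of (Z/2)^{n-t} × (Z/2)^t lies in S. -/
/-- Under the hypotheses of the reconstruction lemma, for every
`γ ∈ {0,1}^k` one has `f(0, Σ γ_i v_i) = f(Σ γ_i e_i, 0)`, and consequently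
`(Σ γ_i e_i, Σ γ_i v_i) ∈ S`. -/
theorem stmt12 {a t k : ℕ} {B : Type*}
    (f : (Fin a → ZMod 2) × (Fin t → ZMod 2) → B)
    (S : AddSubgroup ((Fin a → ZMod 2) × (Fin t → ZMod 2)))
    (hf : ∀ x y, f x = f y ↔ x + y ∈ S)
    (e : Fin k → (Fin a → ZMod 2))
    (he_indep : LinearIndependent (ZMod 2) e)
    (he_span : ∀ x : Fin a → ZMod 2,
      (∃ b, (x, b) ∈ S) ↔ x ∈ Submodule.span (ZMod 2) (Set.range e))
    (v : Fin k → (Fin t → ZMod 2))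
    (hv : ∀ i, f (0, v i) = f (e i, 0)) :
    ∀ γ : Fin k → ZMod 2,
      f (0, ∑ i, γ i • v i) = f (∑ i, γ i • e i, 0) ∧
      (∑ i, γ i • e i, ∑ i, γ i • v i) ∈ S := by
  intro γ
  have hcases : ∀ x : ZMod 2, x = 0 ∨ x = 1 := by decide
  have hS : ∀ i, (e i, v i) ∈ S := fun i => by
    have h := (hf (0, v i) (e i, 0)).mp (hv i)
    simpa [Prod.ext_iff] using h
  have hsum : (∑ i, γ i • e i, ∑ i, γ i • v i) ∈ S := by
    have heq : (∑ i, γ i • e i, ∑ i, γ i • v i)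
        = ∑ i, γ i • (e i, v i) := by
      ext <;> simp [Prod.fst_sum, Prod.snd_sum]
    rw [heq]
    refine S.sum_mem fun i _ => ?_
    rcases hcases (γ i) with h | h
    · simp [h]
    · simpa [h] using hS i
  refine ⟨(hf _ _).mpr ?_, hsum⟩
  simpa [Prod.ext_iff] using hsum
end
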